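/- For each of the three ordered paths on vertex set {1,2,3,4} with edge sets {{1,3},{2,4},{3,4}}, {{1,2},{2,4},{3,4}}, and {{1,2},{1,4},{3,4}} respectively, the canonical (Erdős–Rado) Ramsey number equals 6. That is: for each such ordered path P, every edge-coloring of the ordered complete graph K_6 contains a canonically colored copy of P, and there exists an edge-coloring of the ordered K_5 with no canonically colored copy of P. -/
import Mathlib


/-- Given an ordered graph on `Fin m` whose edge list `E` consists of pairs `(a, b)` with
`a < b`, an order-preserving injection `f : Fin m → Fin n`, and an edge-coloring `χ` of the
ordered complete graph on `Fin n`, the copy of the graph given by `f` is *canonically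
colored* if it is monochromatic, rainbow, lower lexicographic (two edges of the copy get
the same color iff they have the same smaller endpoint), or upper lexicographic (two edges
of the copy get the same color iff they have the same larger endpoint). -/
def CanonicalCopy {m n : ℕ} (E : List (Fin m × Fin m)) (χ : Sym2 (Fin n) → ℕ)
    (f : Fin m → Fin n) : Prop :=
  (∀ e ∈ E, ∀ e' ∈ E, χ s(f e.1, f e.2) = χ s(f e'.1, f e'.2)) ∨
  (∀ e ∈ E, ∀ e' ∈ E, χ s(f e.1, f e.2) = χ s(f e'.1, f e'.2) → e = e') ∨
  (∀ e ∈ E, ∀ e' ∈ E, (χ s(f e.1, f e.2) = χ s(f e'.1, f e'.2) ↔ e.1 = e'.1)) ∨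
  (∀ e ∈ E, ∀ e' ∈ E, (χ s(f e.1, f e.2) = χ s(f e'.1, f e'.2) ↔ e.2 = e'.2))

/-- The edge-coloring `χ` of the ordered complete graph on `Fin n` contains a canonically
colored copy of the ordered graph on `Fin m` with edge list `E`: a copy is given by an
order-preserving (strictly monotone) injection `f : Fin m → Fin n`. -/
def HasCanonicalCopy {m : ℕ} (E : List (Fin m × Fin m)) (n : ℕ)
    (χ : Sym2 (Fin n) → ℕ) : Prop :=
  ∃ f : Fin m → Fin n, StrictMono f ∧ CanonicalCopy E χ f

/-- First ordered graph's edge list (0-indexed). -/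
def pathA : List (Fin 4 × Fin 4) := [(0, 2), (1, 3), (2, 3)]

/-- Second ordered graph's edge list (0-indexed). -/
def pathB : List (Fin 4 × Fin 4) := [(0, 1), (1, 3), (2, 3)]

/-- Third ordered graph's edge list (0-indexed). -/
def pathC : List (Fin 4 × Fin 4) := [(0, 1), (0, 3), (2, 3)]

/-! ### Auxiliary machinery -/

instance instDecCC {m n : ℕ} (E : List (Fin m × Fin m)) (χ : Sym2 (Fin n) → ℕ)
    (f : Fin m → Fin n) : Decidable (CanonicalCopy E χ f) := by
  unfold CanonicalCopy
  exact @instDecidableOr _ _ inferInstance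
    (@instDecidableOr _ _ inferInstance
      (@instDecidableOr _ _ inferInstance inferInstance))

lemma strictMono_vec4 {n : ℕ} {a b c d : Fin n} (hab : a < b) (hbc : b < c) (hcd : c < d) :
    StrictMono ![a, b, c, d] := by
  intro i j hij
  fin_cases i <;> fin_cases j <;> simp_all <;>
    first
      | exact hab | exact hbc | exact hcd
      | exact hab.trans hbc | exact hbc.trans hcd
      | exact (hab.trans hbc).trans hcd
      | exact absurd hij (by decide)

lemma bridge {E : List (Fin 4 × Fin 4)} {n : ℕ} {χ : Sym2 (Fin n) → ℕ}
    (h : HasCanonicalCopy E n χ) :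
    ∃ a b c d : Fin n, a < b ∧ b < c ∧ c < d ∧ CanonicalCopy E χ ![a, b, c, d] := by
  obtain ⟨f, hf, hc⟩ := h
  refine ⟨f 0, f 1, f 2, f 3, hf (by decide), hf (by decide), hf (by decide), ?_⟩
  have hfe : ![f 0, f 1, f 2, f 3] = f := by funext i; fin_cases i <;> rfl
  rwa [hfe]

/-! ### Pattern lemmas : from the absence of a canonical copy on a quadruple derive
the "bad pattern" of colors on the three edges of the path. -/

lemma notCanA {n : ℕ} (χ : Sym2 (Fin n) → ℕ) (a b c d : Fin n)
    (h : ¬ CanonicalCopy pathA χ ![a, b, c, d]) :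
    (χ s(a, c) = χ s(b, d) ∧ χ s(b, d) ≠ χ s(c, d)) ∨
    (χ s(a, c) = χ s(c, d) ∧ χ s(a, c) ≠ χ s(b, d)) := by
  rcases eq_or_ne (χ s(a, c)) (χ s(b, d)) with h12 | h12
  · rcases eq_or_ne (χ s(b, d)) (χ s(c, d)) with h23 | h23
    · exact absurd (Or.inl (by intro e he e' he'; fin_cases he <;> fin_cases he' <;>
        simp_all [pathA])) h
    · exact Or.inl ⟨h12, h23⟩
  · rcases eq_or_ne (χ s(b, d)) (χ s(c, d)) with h23 | h23
    · exact absurd (Or.inr (Or.inr (Or.inr (by intro e he e' he'; fin_cases he <;>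
        fin_cases he' <;> simp_all [pathA] <;> omega)))) h
    · rcases eq_or_ne (χ s(a, c)) (χ s(c, d)) with h13 | h13
      · exact Or.inr ⟨h13, h12⟩
      · exact absurd (Or.inr (Or.inl (by intro e he e' he'; fin_cases he <;>
          fin_cases he' <;> simp_all [pathA] <;> omega))) h

lemma notCanB {n : ℕ} (χ : Sym2 (Fin n) → ℕ) (a b c d : Fin n)
    (h : ¬ CanonicalCopy pathB χ ![a, b, c, d]) :
    (χ s(a, b) = χ s(b, d) ∧ χ s(b, d) ≠ χ s(c, d)) ∨
    (χ s(a, b) = χ s(c, d) ∧ χ s(a, b) ≠ χ s(b, d)) := by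
  rcases eq_or_ne (χ s(a, b)) (χ s(b, d)) with h12 | h12
  · rcases eq_or_ne (χ s(b, d)) (χ s(c, d)) with h23 | h23
    · exact absurd (Or.inl (by intro e he e' he'; fin_cases he <;> fin_cases he' <;>
        simp_all [pathB])) h
    · exact Or.inl ⟨h12, h23⟩
  · rcases eq_or_ne (χ s(b, d)) (χ s(c, d)) with h23 | h23
    · exact absurd (Or.inr (Or.inr (Or.inr (by intro e he e' he'; fin_cases he <;>
        fin_cases he' <;> simp_all [pathB] <;> omega)))) h
    · rcases eq_or_ne (χ s(a, b)) (χ s(c, d)) with h13 | h13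
      · exact Or.inr ⟨h13, h12⟩
      · exact absurd (Or.inr (Or.inl (by intro e he e' he'; fin_cases he <;>
          fin_cases he' <;> simp_all [pathB] <;> omega))) h

lemma notCanC {n : ℕ} (χ : Sym2 (Fin n) → ℕ) (a b c d : Fin n)
    (h : ¬ CanonicalCopy pathC χ ![a, b, c, d]) :
    χ s(a, b) = χ s(c, d) ∧ χ s(a, b) ≠ χ s(a, d) := by
  rcases eq_or_ne (χ s(a, b)) (χ s(a, d)) with h12 | h12
  · rcases eq_or_ne (χ s(a, d)) (χ s(c, d)) with h23 | h23
    · exact absurd (Or.inl (by intro e he e' he'; fin_cases he <;> fin_cases he' <;>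
        simp_all [pathC])) h
    · exact absurd (Or.inr (Or.inr (Or.inl (by intro e he e' he'; fin_cases he <;>
        fin_cases he' <;> simp_all [pathC] <;> omega)))) h
  · rcases eq_or_ne (χ s(a, d)) (χ s(c, d)) with h23 | h23
    · exact absurd (Or.inr (Or.inr (Or.inr (by intro e he e' he'; fin_cases he <;>
        fin_cases he' <;> simp_all [pathC] <;> omega)))) h
    · rcases eq_or_ne (χ s(a, b)) (χ s(c, d)) with h13 | h13
      · exact ⟨h13, h12⟩
      · exact absurd (Or.inr (Or.inl (by intro e he e' he'; fin_cases he <;>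
          fin_cases he' <;> simp_all [pathC] <;> omega))) h

/-! ### Upper bounds on `K₆` -/

lemma upperA (χ : Sym2 (Fin 6) → ℕ) : HasCanonicalCopy pathA 6 χ := by
  by_contra h
  have H : ∀ a b c d : Fin 6, a < b → b < c → c < d → ¬ CanonicalCopy pathA χ ![a, b, c, d] :=
    fun a b c d hab hbc hcd hc => h ⟨![a, b, c, d], strictMono_vec4 hab hbc hcd, hc⟩
  have h1 := notCanA χ 0 1 2 4 (H 0 1 2 4 (by decide) (by decide) (by decide))
  have h2 := notCanA χ 0 1 2 5 (H 0 1 2 5 (by decide) (by decide) (by decide))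
  have h3 := notCanA χ 0 1 3 5 (H 0 1 3 5 (by decide) (by decide) (by decide))
  have h4 := notCanA χ 0 1 4 5 (H 0 1 4 5 (by decide) (by decide) (by decide))
  have h5 := notCanA χ 1 2 3 5 (H 1 2 3 5 (by decide) (by decide) (by decide))
  have h6 := notCanA χ 1 2 4 5 (H 1 2 4 5 (by decide) (by decide) (by decide))
  have h7 := notCanA χ 1 3 4 5 (H 1 3 4 5 (by decide) (by decide) (by decide))
  have h8 := notCanA χ 2 3 4 5 (H 2 3 4 5 (by decide) (by decide) (by decide))
  rcases h1 with h1 | h1 <;> rcases h2 with h2 | h2 <;> rcases h3 with h3 | h3 <;>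
    rcases h4 with h4 | h4 <;> rcases h5 with h5 | h5 <;> rcases h6 with h6 | h6 <;>
    rcases h7 with h7 | h7 <;> rcases h8 with h8 | h8 <;> omega

lemma upperB (χ : Sym2 (Fin 6) → ℕ) : HasCanonicalCopy pathB 6 χ := by
  by_contra h
  have H : ∀ a b c d : Fin 6, a < b → b < c → c < d → ¬ CanonicalCopy pathB χ ![a, b, c, d] :=
    fun a b c d hab hbc hcd hc => h ⟨![a, b, c, d], strictMono_vec4 hab hbc hcd, hc⟩
  have h1 := notCanB χ 0 1 2 3 (H 0 1 2 3 (by decide) (by decide) (by decide))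
  have h2 := notCanB χ 0 1 3 5 (H 0 1 3 5 (by decide) (by decide) (by decide))
  have h3 := notCanB χ 0 1 4 5 (H 0 1 4 5 (by decide) (by decide) (by decide))
  have h4 := notCanB χ 1 3 4 5 (H 1 3 4 5 (by decide) (by decide) (by decide))
  have h5 := notCanB χ 2 3 4 5 (H 2 3 4 5 (by decide) (by decide) (by decide))
  rcases h1 with h1 | h1 <;> rcases h2 with h2 | h2 <;> rcases h3 with h3 | h3 <;>
    rcases h4 with h4 | h4 <;> rcases h5 with h5 | h5 <;> omega

lemma upperC (χ : Sym2 (Fin 6) → ℕ) : HasCanonicalCopy pathC 6 χ := by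
  by_contra h
  have H : ∀ a b c d : Fin 6, a < b → b < c → c < d → ¬ CanonicalCopy pathC χ ![a, b, c, d] :=
    fun a b c d hab hbc hcd hc => h ⟨![a, b, c, d], strictMono_vec4 hab hbc hcd, hc⟩
  have h1 := notCanC χ 0 1 2 5 (H 0 1 2 5 (by decide) (by decide) (by decide))
  have h2 := notCanC χ 0 1 4 5 (H 0 1 4 5 (by decide) (by decide) (by decide))
  have h3 := notCanC χ 2 3 4 5 (H 2 3 4 5 (by decide) (by decide) (by decide))
  omega

/-! ### Lower bounds : colorings of `K₅` with no canonical copy -/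

def tabA : Fin 5 → Fin 5 → ℕ :=
  ![![9,0,0,1,0],![0,9,0,0,2],![0,0,9,1,0],![1,0,1,9,1],![0,2,0,1,9]]
def chiA : Sym2 (Fin 5) → ℕ := Sym2.lift ⟨tabA, by decide⟩

def tabB : Fin 5 → Fin 5 → ℕ :=
  ![![9,0,1,0,0],![0,9,1,0,0],![1,1,9,1,1],![0,0,1,9,2],![0,0,1,2,9]]
def chiB : Sym2 (Fin 5) → ℕ := Sym2.lift ⟨tabB, by decide⟩

def tabC : Fin 5 → Fin 5 → ℕ :=
  ![![9,0,0,1,1],![0,9,0,0,1],![0,0,9,0,0],![1,0,0,9,0],![1,1,0,0,9]]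
def chiC : Sym2 (Fin 5) → ℕ := Sym2.lift ⟨tabC, by decide⟩

set_option maxRecDepth 10000 in
lemma lowerA : ¬ HasCanonicalCopy pathA 5 chiA := by
  intro h
  obtain ⟨a, b, c, d, hab, hbc, hcd, hc⟩ := bridge h
  revert hab hbc hcd hc
  revert a b c d
  decide

set_option maxRecDepth 10000 in
lemma lowerB : ¬ HasCanonicalCopy pathB 5 chiB := by
  intro h
  obtain ⟨a, b, c, d, hab, hbc, hcd, hc⟩ := bridge h
  revert hab hbc hcd hc
  revert a b c d
  decide

set_option maxRecDepth 10000 in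
lemma lowerC : ¬ HasCanonicalCopy pathC 5 chiC := by
  intro h
  obtain ⟨a, b, c, d, hab, hbc, hcd, hc⟩ := bridge h
  revert hab hbc hcd hc
  revert a b c d
  decide

/-- Each of the three ordered graphs has canonical Ramsey number 6. -/
theorem ER_three_P4_eq_six :
    ((∀ χ : Sym2 (Fin 6) → ℕ, HasCanonicalCopy pathA 6 χ) ∧
      (∃ χ : Sym2 (Fin 5) → ℕ, ¬ HasCanonicalCopy pathA 5 χ)) ∧
    ((∀ χ : Sym2 (Fin 6) → ℕ, HasCanonicalCopy pathB 6 χ) ∧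
      (∃ χ : Sym2 (Fin 5) → ℕ, ¬ HasCanonicalCopy pathB 5 χ)) ∧
    ((∀ χ : Sym2 (Fin 6) → ℕ, HasCanonicalCopy pathC 6 χ) ∧
      (∃ χ : Sym2 (Fin 5) → ℕ, ¬ HasCanonicalCopy pathC 5 χ)) :=
  ⟨⟨upperA, chiA, lowerA⟩, ⟨upperB, chiB, lowerB⟩, ⟨upperC, chiC, lowerC⟩⟩
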